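/- arXiv:math/0003025 — 3 statements merged into one kernel-verified Lean document; each statement's English description precedes it below -/
import Mathlib

section
/- Let p be a prime, d ≥ 1, and let f be a polynomial in d variables with coefficients in ℤ_p. For every real number s > 0, Igusa's local zeta function of f satisfies ∫_{ℤ_p^d} |f(x)|_p^s dμ(x) = Σ_{n=0}^∞ card(X_{n,f}) · p^{-((n+1)d + n s)}, where the sum on the right-hand side converges. -/
open MeasureTheory MvPolynomial

/-- `Y_{n,f}`: the set of `x ∈ ℤ_p^d` with `|f(x)|_p = p^{-n}`. -/
def Yset (p : ℕ) [Fact p.Prime] {d : ℕ} (f : MvPolynomial (Fin d) ℤ_[p]) (n : ℕ) :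
    Set (Fin d → ℤ_[p]) :=
  {x | ‖MvPolynomial.eval x f‖ = (p : ℝ) ^ (-(n : ℤ))}

/-- `X_{n,f}`: the image of `Y_{n,f}` under coordinatewise reduction mod `p^{n+1}`. -/
def Xset (p : ℕ) [Fact p.Prime] {d : ℕ} (f : MvPolynomial (Fin d) ℤ_[p]) (n : ℕ) :
    Set (Fin d → ZMod (p ^ (n + 1))) :=
  (fun (x : Fin d → ℤ_[p]) (i : Fin d) => PadicInt.toZModPow (n + 1) (x i)) '' Yset p f n

section Aux

variable (p : ℕ) [hp : Fact p.Prime] {d : ℕ}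

/-- Coordinatewise reduction map. -/
noncomputable def redMap (k : ℕ) : (Fin d → ℤ_[p]) → (Fin d → ZMod (p ^ k)) :=
  fun x i => PadicInt.toZModPow k (x i)

lemma toZModPow_eq_iff (k : ℕ) (a b : ℤ_[p]) :
    PadicInt.toZModPow k a = PadicInt.toZModPow k b ↔ ‖a - b‖ ≤ (p : ℝ) ^ (-(k : ℤ)) := by
  rw [← sub_eq_zero, ← map_sub, ← RingHom.mem_ker, PadicInt.ker_toZModPow,
    ← PadicInt.norm_le_pow_iff_mem_span_pow]

lemma toZModPow_lift (k : ℕ) (c : ZMod (p ^ k)) :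
    PadicInt.toZModPow k ((c.val : ℤ_[p])) = c := by
  haveI : NeZero (p ^ k) := ⟨pow_ne_zero k hp.out.ne_zero⟩
  rw [map_natCast]
  exact ZMod.natCast_rightInverse c

lemma redMap_add (k : ℕ) (x y : Fin d → ℤ_[p]) :
    redMap p k (x + y) = redMap p k x + redMap p k y := by
  funext i; simp [redMap]

lemma redMap_lift (k : ℕ) (c : Fin d → ZMod (p ^ k)) :
    redMap p k (fun i => ((c i).val : ℤ_[p])) = c := by
  funext i; exact toZModPow_lift p k (c i)

variable [MeasurableSpace ℤ_[p]] [BorelSpace ℤ_[p]]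

lemma fiber_measurable (k : ℕ) (c : Fin d → ZMod (p ^ k)) :
    MeasurableSet (redMap p k ⁻¹' {c} : Set (Fin d → ℤ_[p])) := by
  have : (redMap p k ⁻¹' {c} : Set (Fin d → ℤ_[p])) =
      ⋂ i : Fin d, (fun x : Fin d → ℤ_[p] => x i) ⁻¹'
        Metric.closedBall (((c i).val : ℤ_[p])) ((p : ℝ) ^ (-(k : ℤ))) := by
    ext x
    simp only [Set.mem_preimage, Set.mem_singleton_iff, Set.mem_iInter, funext_iff,
      Metric.mem_closedBall, dist_eq_norm]
    refine forall_congr' fun i => ?_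
    rw [show (redMap p k x i = c i) ↔
        (PadicInt.toZModPow k (x i) = PadicInt.toZModPow k (((c i).val : ℤ_[p]))) by
      rw [toZModPow_lift]; rfl]
    exact toZModPow_eq_iff p k _ _
  rw [this]
  exact MeasurableSet.iInter fun i =>
    (measurable_pi_apply i) measurableSet_closedBall

variable (μ : Measure (Fin d → ℤ_[p])) [μ.IsAddHaarMeasure]

lemma fiber_measure_eq (k : ℕ) (c₁ c₂ : Fin d → ZMod (p ^ k)) :
    μ (redMap p k ⁻¹' {c₁}) = μ (redMap p k ⁻¹' {c₂}) := by
  set L : (Fin d → ZMod (p ^ k)) → (Fin d → ℤ_[p]) :=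
    fun c i => ((c i).val : ℤ_[p]) with hL
  have key : (fun x => (L c₁ - L c₂) + x) ⁻¹' (redMap p k ⁻¹' {c₁}) =
      redMap p k ⁻¹' {c₂} := by
    ext x
    simp only [Set.mem_preimage, Set.mem_singleton_iff]
    have h1 : redMap p k (L c₁ - L c₂ + x) = c₁ - c₂ + redMap p k x := by
      funext i
      simp only [redMap, Pi.add_apply, Pi.sub_apply, map_add, map_sub]
      rw [show (PadicInt.toZModPow k) (L c₁ i) = c₁ i from toZModPow_lift p k (c₁ i),
        show (PadicInt.toZModPow k) (L c₂ i) = c₂ i from toZModPow_lift p k (c₂ i)]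
    rw [h1]
    constructor
    · intro h; have := sub_eq_iff_eq_add'.mpr h.symm; simpa using this.symm
    · intro h; rw [h]; ring
  rw [← key, measure_preimage_add]

lemma fiber_measure (hμ : μ Set.univ = 1) (k : ℕ) (c : Fin d → ZMod (p ^ k)) :
    μ (redMap p k ⁻¹' {c}) = ((((p ^ k) ^ d : ℕ)) : ENNReal)⁻¹ := by
  haveI : NeZero (p ^ k) := ⟨pow_ne_zero k hp.out.ne_zero⟩
  have huniv : (Set.univ : Set (Fin d → ℤ_[p])) =
      ⋃ c' : Fin d → ZMod (p ^ k), redMap p k ⁻¹' {c'} := by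
    ext x; simp only [Set.mem_univ, true_iff, Set.mem_iUnion, Set.mem_preimage,
      Set.mem_singleton_iff]
    exact ⟨redMap p k x, rfl⟩
  have hdisj : Pairwise (Function.onFun Disjoint
      fun c' : Fin d → ZMod (p ^ k) => redMap p k ⁻¹' {c'}) := by
    intro a b hab
    refine Set.disjoint_left.mpr fun x hxa hxb => hab ?_
    simp only [Set.mem_preimage, Set.mem_singleton_iff] at hxa hxb
    rw [← hxa, ← hxb]
  have hsum : μ Set.univ = ∑' c' : Fin d → ZMod (p ^ k), μ (redMap p k ⁻¹' {c'}) := by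
    rw [huniv, measure_iUnion hdisj fun c' => fiber_measurable p k c']
  rw [hμ] at hsum
  have hconst : ∀ c' : Fin d → ZMod (p ^ k),
      μ (redMap p k ⁻¹' {c'}) = μ (redMap p k ⁻¹' {c}) :=
    fun c' => fiber_measure_eq p μ k c' c
  rw [tsum_fintype] at hsum
  simp only [hconst] at hsum
  rw [Finset.sum_const, Finset.card_univ] at hsum
  have hcard : Fintype.card (Fin d → ZMod (p ^ k)) = (p ^ k) ^ d := by
    rw [Fintype.card_fun, ZMod.card, Fintype.card_fin]
  rw [hcard, nsmul_eq_mul] at hsum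
  exact ENNReal.eq_inv_of_mul_eq_one_left (by rw [mul_comm] at hsum; exact hsum.symm)

lemma measure_preimage_set (hμ : μ Set.univ = 1) (k : ℕ)
    (S : Set (Fin d → ZMod (p ^ k))) :
    μ (redMap p k ⁻¹' S) = (S.ncard : ENNReal) * ((((p ^ k) ^ d : ℕ)) : ENNReal)⁻¹ := by
  haveI : Fintype (Fin d → ZMod (p ^ k)) := inferInstance
  have hS : S.Finite := S.toFinite
  have hpre : redMap p k ⁻¹' S = ⋃ c ∈ hS.toFinset, redMap p k ⁻¹' {c} := by
    ext x
    simp only [Set.mem_preimage, Set.mem_iUnion, Set.Finite.mem_toFinset,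
      Set.mem_singleton_iff]
    exact ⟨fun h => ⟨redMap p k x, h, rfl⟩, fun ⟨c, hc, hcx⟩ => hcx ▸ hc⟩
  rw [hpre, measure_biUnion_finset ?_ (fun c _ => fiber_measurable p k c)]
  · rw [Finset.sum_congr rfl fun c _ => fiber_measure p μ hμ k c, Finset.sum_const,
      nsmul_eq_mul, Set.ncard_eq_toFinset_card S hS]
  · intro a _ b _ hab
    refine Set.disjoint_left.mpr fun x hxa hxb => hab ?_
    simp only [Set.mem_preimage, Set.mem_singleton_iff] at hxa hxb
    rw [← hxa, ← hxb]

end Aux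

section Main

variable (p : ℕ) [hp : Fact p.Prime] {d : ℕ}

lemma eval_red_congr (f : MvPolynomial (Fin d) ℤ_[p]) (k : ℕ) (x y : Fin d → ℤ_[p])
    (h : redMap p k x = redMap p k y) :
    PadicInt.toZModPow k (MvPolynomial.eval x f) =
      PadicInt.toZModPow k (MvPolynomial.eval y f) := by
  have hx : PadicInt.toZModPow k (MvPolynomial.eval x f) =
      eval₂ (PadicInt.toZModPow k) (redMap p k x) f := by
    rw [← eval₂_id, eval₂_comp_left]; rfl
  have hy : PadicInt.toZModPow k (MvPolynomial.eval y f) =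
      eval₂ (PadicInt.toZModPow k) (redMap p k y) f := by
    rw [← eval₂_id, eval₂_comp_left]; rfl
  rw [hx, hy, h]

lemma Yset_eq_preimage (f : MvPolynomial (Fin d) ℤ_[p]) (n : ℕ) :
    Yset p f n = redMap p (n + 1) ⁻¹' (Xset p f n) := by
  ext x
  constructor
  · intro hx
    exact ⟨x, hx, rfl⟩
  · rintro ⟨y, hy, hyx⟩
    have hred : redMap p (n + 1) y = redMap p (n + 1) x := hyx
    have hcong := eval_red_congr p f (n + 1) y x hred
    have hnorm : ‖MvPolynomial.eval y f - MvPolynomial.eval x f‖ ≤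
        (p : ℝ) ^ (-((n + 1 : ℕ) : ℤ)) := (toZModPow_eq_iff p (n + 1) _ _).mp hcong
    have hplt : (1 : ℝ) < p := by exact_mod_cast hp.out.one_lt
    have hlt : (p : ℝ) ^ (-((n + 1 : ℕ) : ℤ)) < (p : ℝ) ^ (-(n : ℤ)) := by
      apply zpow_lt_zpow_right₀ hplt; push_cast; omega
    have hy' : ‖MvPolynomial.eval y f‖ = (p : ℝ) ^ (-(n : ℤ)) := hy
    -- ultrametric: norm of x-eval equals norm of y-eval
    have hδ : ‖MvPolynomial.eval x f - MvPolynomial.eval y f‖ < ‖MvPolynomial.eval y f‖ := by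
      rw [hy']; rw [← norm_neg]; simpa using lt_of_le_of_lt hnorm hlt
    show ‖MvPolynomial.eval x f‖ = (p : ℝ) ^ (-(n : ℤ))
    rw [← hy']
    set a := MvPolynomial.eval y f
    set b := MvPolynomial.eval x f
    have h1 : ‖b‖ ≤ ‖a‖ := by
      have : b = a + (b - a) := by ring
      rw [this]
      exact (PadicInt.nonarchimedean _ _).trans (max_le le_rfl hδ.le)
    have h2 : ‖a‖ ≤ max ‖b‖ ‖b - a‖ := by
      have : a = b + -(b - a) := by ring
      calc ‖a‖ = ‖b + -(b - a)‖ := by rw [← this]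
        _ ≤ max ‖b‖ ‖-(b - a)‖ := PadicInt.nonarchimedean _ _
        _ = max ‖b‖ ‖b - a‖ := by rw [norm_neg]
    rcases max_cases ‖b‖ ‖b - a‖ with ⟨hmax, _⟩ | ⟨hmax, hle⟩
    · exact le_antisymm h1 (hmax ▸ h2)
    · exact absurd (h2.trans (hmax.le)) (not_le.mpr hδ)

lemma compl_mem_zero (f : MvPolynomial (Fin d) ℤ_[p]) (x : Fin d → ℤ_[p])
    (hx : x ∉ ⋃ n : ℕ, Yset p f n) : MvPolynomial.eval x f = 0 := by
  by_contra h
  apply hx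
  refine Set.mem_iUnion.mpr ⟨(MvPolynomial.eval x f).valuation, ?_⟩
  show ‖MvPolynomial.eval x f‖ = _
  rw [PadicInt.norm_eq_zpow_neg_valuation h]

end Main

/-- Igusa's local zeta function identity:
`∫_{ℤ_p^d} |f(x)|_p^s dμ = ∑_n card(X_{n,f}) p^{-((n+1)d + ns)}`, with convergent sum. -/
theorem igusa_local_zeta_eq_tsum (p : ℕ) [Fact p.Prime] (d : ℕ) (hd : 1 ≤ d)
    (f : MvPolynomial (Fin d) ℤ_[p]) (s : ℝ) (hs : 0 < s)
    [MeasurableSpace ℤ_[p]] [BorelSpace ℤ_[p]]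
    (μ : Measure (Fin d → ℤ_[p])) [μ.IsAddHaarMeasure] (hμ : μ Set.univ = 1) :
    Summable (fun n : ℕ =>
      ((Xset p f n).ncard : ℝ) * (p : ℝ) ^ (-((((n + 1) * d : ℕ) : ℝ) + (n : ℝ) * s))) ∧
    ∫ x, ‖MvPolynomial.eval x f‖ ^ s ∂μ =
      ∑' n : ℕ,
        ((Xset p f n).ncard : ℝ) * (p : ℝ) ^ (-((((n + 1) * d : ℕ) : ℝ) + (n : ℝ) * s)) := by
  haveI : IsFiniteMeasure μ := ⟨by rw [hμ]; exact ENNReal.one_lt_top⟩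
  have hp' : Fact p.Prime := inferInstance
  have hppos : (0 : ℝ) < p := by exact_mod_cast hp'.out.pos
  -- the integrand
  set g : (Fin d → ℤ_[p]) → ℝ := fun x => ‖MvPolynomial.eval x f‖ ^ s with hg
  have hgcont : Continuous g := f.continuous_eval.norm.rpow_const fun x => Or.inr hs.le
  have hgmeas : Measurable g := hgcont.measurable
  have hgint : Integrable g μ := by
    refine Integrable.mono' (integrable_const (1 : ℝ)) hgcont.aestronglyMeasurable ?_
    filter_upwards with x
    rw [Real.norm_eq_abs, abs_of_nonneg (Real.rpow_nonneg (norm_nonneg _) s)]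
    exact Real.rpow_le_one (norm_nonneg _) (PadicInt.norm_le_one _) hs.le
  -- measurability and disjointness of the Y sets
  have hYmeas : ∀ n : ℕ, MeasurableSet (Yset p f n) := fun n => by
    have : Yset p f n = (fun x => ‖MvPolynomial.eval x f‖) ⁻¹' {(p : ℝ) ^ (-(n : ℤ))} := rfl
    rw [this]
    exact f.continuous_eval.norm.measurable (measurableSet_singleton _)
  have hYdisj : Pairwise (Function.onFun Disjoint (Yset p f)) := by
    intro m n hmn
    refine Set.disjoint_left.mpr fun x hxm hxn => hmn ?_
    have hm : ‖MvPolynomial.eval x f‖ = (p : ℝ) ^ (-(m : ℤ)) := hxm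
    have hn : ‖MvPolynomial.eval x f‖ = (p : ℝ) ^ (-(n : ℤ)) := hxn
    have hplt : (1 : ℝ) < p := by exact_mod_cast hp'.out.one_lt
    have := hm.symm.trans hn
    have h2 : (-(m : ℤ)) = -(n : ℤ) := zpow_right_injective₀ (by positivity) (ne_of_gt hplt) this
    omega
  -- integral over complement of the union vanishes
  have hcompl : ∀ x, x ∉ (⋃ n : ℕ, Yset p f n) → g x = 0 := by
    intro x hx
    rw [hg]
    simp only
    rw [compl_mem_zero p f x hx, norm_zero, Real.zero_rpow hs.ne']
  have hint_eq : ∫ x in (⋃ n : ℕ, Yset p f n), g x ∂μ = ∫ x, g x ∂μ :=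
    setIntegral_eq_integral_of_forall_compl_eq_zero hcompl
  -- the has-sum statement
  have hsum : HasSum (fun n => ∫ x in Yset p f n, g x ∂μ)
      (∫ x in (⋃ n : ℕ, Yset p f n), g x ∂μ) :=
    hasSum_integral_iUnion hYmeas hYdisj hgint.integrableOn
  -- compute each set integral
  have hμY : ∀ n : ℕ, μ (Yset p f n) =
      ((Xset p f n).ncard : ENNReal) * ((((p ^ (n + 1)) ^ d : ℕ)) : ENNReal)⁻¹ := fun n => by
    rw [Yset_eq_preimage, measure_preimage_set p μ hμ]
  have hterm : ∀ n : ℕ, ∫ x in Yset p f n, g x ∂μ =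
      ((Xset p f n).ncard : ℝ) * (p : ℝ) ^ (-((((n + 1) * d : ℕ) : ℝ) + (n : ℝ) * s)) := by
    intro n
    have hconst : ∫ x in Yset p f n, g x ∂μ =
        ∫ _x in Yset p f n, ((p : ℝ) ^ (-(n : ℤ))) ^ s ∂μ := by
      refine setIntegral_congr_fun (hYmeas n) fun x hx => ?_
      rw [hg]; simp only
      rw [show ‖MvPolynomial.eval x f‖ = (p : ℝ) ^ (-(n : ℤ)) from hx]
    rw [hconst, setIntegral_const, measureReal_def, hμY n]
    rw [smul_eq_mul]
    rw [ENNReal.toReal_mul, ENNReal.toReal_inv]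
    simp only [ENNReal.toReal_natCast]
    -- now pure real arithmetic
    rw [mul_assoc]
    congr 1
    -- (((p^(n+1))^d : ℕ) : ℝ)⁻¹ * ((p:ℝ)^(-(n:ℤ)))^s = p ^ (-(((n+1)*d : ℕ):ℝ) - ...)
    rw [neg_add, Real.rpow_add hppos]
    congr 1
    · rw [Real.rpow_neg hppos.le, Real.rpow_natCast]
      congr 1
      push_cast
      rw [pow_mul]
    · rw [← Real.rpow_intCast (p : ℝ) (-(n : ℤ)), ← Real.rpow_mul hppos.le]
      congr 1
      push_cast
      ring
  have hfun : (fun n => ∫ x in Yset p f n, g x ∂μ) =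
      fun n => ((Xset p f n).ncard : ℝ) * (p : ℝ) ^ (-((((n + 1) * d : ℕ) : ℝ) + (n : ℝ) * s)) :=
    funext hterm
  rw [hfun, hint_eq] at hsum
  exact ⟨hsum.summable, hsum.tsum_eq.symm⟩
end

section
/- Let κ0 ≥ 2, κg ≥ 1 and g ≥ 2 be integers with N := 2g − κg − 1 > 0, and let rational numbers N_0, N_g, ν_0, ν_g satisfy the relations κ0·N_0 = N_g, κg·N_g = N_0 + N, κ0·ν_0 = ν_g + 1 and κg·ν_g = (ν_0 − 1) + 2 − 2g. Then in the field ℚ(s) of rational functions over ℚ the elements ν_0 + s·N_0, ν_g + s·N_g, 1 + s·N and 1 − 2κ0·g + κ0(1 + s·N) are nonzero, and 1/(ν_0 + s·N_0) + 1/((ν_0 + s·N_0)(ν_g + s·N_g)) − 2g/(ν_g + s·N_g) + 1/((ν_g + s·N_g)(1 + s·N)) = (κ0·κg − 1)·(1 + (κ0 − 2g)(1 + s·N)) / ((1 − 2κ0·g + κ0(1 + s·N))·(1 + s·N)). (This is the topological zeta function z_0(ND, s) of Example 4.1.) -/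
set_option maxHeartbeats 2000000

open RatFunc

private theorem key41_aux {F : Type*} [Field F] (k0 kg G n x : F)
    (hd : k0 * kg - 1 ≠ 0) (hn : n = 2 * G - kg - 1)
    (hC : 1 + x * n ≠ 0)
    (hD : 1 - 2 * k0 * G + k0 * (1 + x * n) ≠ 0)
    (nA : n * x - n ≠ 0)
    (nB : 1 + k0 - 2 * k0 * G + k0 * n * x ≠ 0) :
    1 / ((n * x - n) / (k0 * kg - 1)) +
      1 / (((n * x - n) / (k0 * kg - 1)) * ((1 + k0 - 2 * k0 * G + k0 * n * x) / (k0 * kg - 1))) -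
      (2 * G) / ((1 + k0 - 2 * k0 * G + k0 * n * x) / (k0 * kg - 1)) +
      1 / (((1 + k0 - 2 * k0 * G + k0 * n * x) / (k0 * kg - 1)) * (1 + x * n)) =
    (k0 * kg - 1) * (1 + (k0 - 2 * G) * (1 + x * n)) /
      ((1 - 2 * k0 * G + k0 * (1 + x * n)) * (1 + x * n)) := by
  have nA' : n * (x - 1) ≠ 0 := by intro h; apply nA; linear_combination h
  have nB' : 1 + k0 - k0 * 2 * G + n * x * k0 ≠ 0 := by intro h; apply nB; linear_combination h
  have hC' : 1 + n * x ≠ 0 := by intro h; apply hC; linear_combination h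
  have hD' : 1 - k0 * 2 * G + k0 * (1 + n * x) ≠ 0 := by intro h; apply hD; linear_combination h
  have hn0 : n ≠ 0 := left_ne_zero_of_mul nA'
  have hx1 : x - 1 ≠ 0 := right_ne_zero_of_mul nA'
  field_simp
  subst hn
  ring

private theorem lin_ne_zero (a b : ℚ) (hb : b ≠ 0) :
    RatFunc.C a + RatFunc.X * RatFunc.C b ≠ (0 : RatFunc ℚ) := by
  have hmap : (algebraMap (Polynomial ℚ) (RatFunc ℚ))
      (Polynomial.C a + Polynomial.X * Polynomial.C b)
      = RatFunc.C a + RatFunc.X * RatFunc.C b := by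
    rw [map_add, map_mul, RatFunc.algebraMap_C, RatFunc.algebraMap_X, RatFunc.algebraMap_C,
      mul_comm]
  rw [← hmap]
  apply RatFunc.algebraMap_ne_zero
  intro h0
  apply hb
  have := congrArg (fun q => Polynomial.coeff q 1) h0
  simpa using this

private theorem C_ne_zero' (a : ℚ) (ha : a ≠ 0) : RatFunc.C a ≠ (0 : RatFunc ℚ) := by
  rw [← RatFunc.algebraMap_C]
  exact RatFunc.algebraMap_ne_zero (by simpa using ha)

/-- Example 4.1: the topological zeta function `z_0(ND, s)` equals
`(κ_0 κ_g − 1)(1 + (κ_0 − 2g)(1 + sN)) / ((1 − 2κ_0 g + κ_0(1 + sN))(1 + sN))`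
in `ℚ(s)`, all the displayed denominators being nonzero. -/
theorem topological_zeta_example41 (κ0 κg g : ℤ) (hκ0 : 2 ≤ κ0) (hκg : 1 ≤ κg) (hg : 2 ≤ g)
    (N : ℚ) (hN : N = 2 * (g : ℚ) - (κg : ℚ) - 1) (hNpos : 0 < N)
    (N0 Ng ν0 νg : ℚ)
    (h1 : (κ0 : ℚ) * N0 = Ng) (h2 : (κg : ℚ) * Ng = N0 + N)
    (h3 : (κ0 : ℚ) * ν0 = νg + 1) (h4 : (κg : ℚ) * νg = (ν0 - 1) + 2 - 2 * (g : ℚ)) :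
    (RatFunc.C ν0 + RatFunc.X * RatFunc.C N0 ≠ (0 : RatFunc ℚ)) ∧
    (RatFunc.C νg + RatFunc.X * RatFunc.C Ng ≠ (0 : RatFunc ℚ)) ∧
    (1 + RatFunc.X * RatFunc.C N ≠ (0 : RatFunc ℚ)) ∧
    (RatFunc.C (1 - 2 * (κ0 : ℚ) * (g : ℚ)) + RatFunc.C (κ0 : ℚ) * (1 + RatFunc.X * RatFunc.C N)
      ≠ (0 : RatFunc ℚ)) ∧
    1 / (RatFunc.C ν0 + RatFunc.X * RatFunc.C N0) +
      1 / ((RatFunc.C ν0 + RatFunc.X * RatFunc.C N0) *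
            (RatFunc.C νg + RatFunc.X * RatFunc.C Ng)) -
      RatFunc.C (2 * (g : ℚ)) / (RatFunc.C νg + RatFunc.X * RatFunc.C Ng) +
      1 / ((RatFunc.C νg + RatFunc.X * RatFunc.C Ng) * (1 + RatFunc.X * RatFunc.C N)) =
    RatFunc.C ((κ0 : ℚ) * (κg : ℚ) - 1) *
        (1 + RatFunc.C ((κ0 : ℚ) - 2 * (g : ℚ)) * (1 + RatFunc.X * RatFunc.C N)) /
      ((RatFunc.C (1 - 2 * (κ0 : ℚ) * (g : ℚ)) +
          RatFunc.C (κ0 : ℚ) * (1 + RatFunc.X * RatFunc.C N)) *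
        (1 + RatFunc.X * RatFunc.C N)) := by
  -- basic rational facts
  have hκ0Q : (2 : ℚ) ≤ (κ0 : ℚ) := by exact_mod_cast hκ0
  have hκgQ : (1 : ℚ) ≤ (κg : ℚ) := by exact_mod_cast hκg
  have hdQ : (κ0 : ℚ) * (κg : ℚ) - 1 ≠ 0 := by nlinarith
  have e1 : N0 * ((κ0 : ℚ) * (κg : ℚ) - 1) = N := by linear_combination (κg : ℚ) * h1 + h2
  have e2 : Ng * ((κ0 : ℚ) * (κg : ℚ) - 1) = (κ0 : ℚ) * N := by
    linear_combination (κ0 : ℚ) * e1 - ((κ0 : ℚ) * (κg : ℚ) - 1) * h1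
  have e3 : ν0 * ((κ0 : ℚ) * (κg : ℚ) - 1) = -N := by
    linear_combination (κg : ℚ) * h3 + h4 + hN
  have e4 : νg * ((κ0 : ℚ) * (κg : ℚ) - 1) = 1 + (κ0 : ℚ) - 2 * (κ0 : ℚ) * (g : ℚ) := by
    linear_combination (-((κ0 : ℚ) * (κg : ℚ) - 1)) * h3 + (κ0 : ℚ) * e3 - (κ0 : ℚ) * hN
  have hNne : N ≠ 0 := ne_of_gt hNpos
  have hκ0ne : (κ0 : ℚ) ≠ 0 := by linarith
  have hN0ne : N0 ≠ 0 := by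
    intro h; rw [h, zero_mul] at e1; exact hNne e1.symm
  have hNgne : Ng ≠ 0 := by
    intro h; rw [h, zero_mul] at e2; exact (mul_ne_zero hκ0ne hNne) e2.symm
  -- the four nonvanishing statements
  have hA : RatFunc.C ν0 + RatFunc.X * RatFunc.C N0 ≠ (0 : RatFunc ℚ) :=
    lin_ne_zero ν0 N0 hN0ne
  have hB : RatFunc.C νg + RatFunc.X * RatFunc.C Ng ≠ (0 : RatFunc ℚ) :=
    lin_ne_zero νg Ng hNgne
  have hC : 1 + RatFunc.X * RatFunc.C N ≠ (0 : RatFunc ℚ) := by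
    simpa using lin_ne_zero 1 N hNne
  have hD : RatFunc.C (1 - 2 * (κ0 : ℚ) * (g : ℚ)) +
      RatFunc.C (κ0 : ℚ) * (1 + RatFunc.X * RatFunc.C N) ≠ (0 : RatFunc ℚ) := by
    have hEq : RatFunc.C (1 - 2 * (κ0 : ℚ) * (g : ℚ)) +
        RatFunc.C (κ0 : ℚ) * (1 + RatFunc.X * RatFunc.C N)
        = RatFunc.C (1 - 2 * (κ0 : ℚ) * (g : ℚ) + (κ0 : ℚ)) +
          RatFunc.X * RatFunc.C ((κ0 : ℚ) * N) := by
      simp only [map_add, map_mul, map_sub, map_one, map_ofNat]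
      ring
    rw [hEq]
    exact lin_ne_zero _ _ (mul_ne_zero hκ0ne hNne)
  refine ⟨hA, hB, hC, hD, ?_⟩
  have hCd : RatFunc.C ((κ0 : ℚ) * (κg : ℚ) - 1) ≠ (0 : RatFunc ℚ) := C_ne_zero' _ hdQ
  have hCd' : RatFunc.C (κ0 : ℚ) * RatFunc.C (κg : ℚ) - 1 ≠ (0 : RatFunc ℚ) := by
    simpa only [map_sub, map_mul, map_one] using hCd
  have DA : RatFunc.C ν0 + RatFunc.X * RatFunc.C N0
      = (RatFunc.C N * RatFunc.X - RatFunc.C N) /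
        (RatFunc.C (κ0 : ℚ) * RatFunc.C (κg : ℚ) - 1) := by
    rw [eq_div_iff hCd']
    calc (RatFunc.C ν0 + RatFunc.X * RatFunc.C N0) *
        (RatFunc.C (κ0 : ℚ) * RatFunc.C (κg : ℚ) - 1)
        = RatFunc.C (ν0 * ((κ0 : ℚ) * (κg : ℚ) - 1)) +
            RatFunc.X * RatFunc.C (N0 * ((κ0 : ℚ) * (κg : ℚ) - 1)) := by
          simp only [map_mul, map_sub, map_one]; ring
      _ = RatFunc.C (-N) + RatFunc.X * RatFunc.C N := by rw [e3, e1]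
      _ = RatFunc.C N * RatFunc.X - RatFunc.C N := by rw [map_neg]; ring
  have DB : RatFunc.C νg + RatFunc.X * RatFunc.C Ng
      = (RatFunc.C (1 + (κ0 : ℚ) - 2 * (κ0 : ℚ) * (g : ℚ)) +
          RatFunc.C (κ0 : ℚ) * RatFunc.C N * RatFunc.X) /
        (RatFunc.C (κ0 : ℚ) * RatFunc.C (κg : ℚ) - 1) := by
    rw [eq_div_iff hCd']
    calc (RatFunc.C νg + RatFunc.X * RatFunc.C Ng) *
        (RatFunc.C (κ0 : ℚ) * RatFunc.C (κg : ℚ) - 1)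
        = RatFunc.C (νg * ((κ0 : ℚ) * (κg : ℚ) - 1)) +
            RatFunc.X * RatFunc.C (Ng * ((κ0 : ℚ) * (κg : ℚ) - 1)) := by
          simp only [map_mul, map_sub, map_one]; ring
      _ = RatFunc.C (1 + (κ0 : ℚ) - 2 * (κ0 : ℚ) * (g : ℚ)) +
            RatFunc.X * RatFunc.C ((κ0 : ℚ) * N) := by rw [e4, e2]
      _ = RatFunc.C (1 + (κ0 : ℚ) - 2 * (κ0 : ℚ) * (g : ℚ)) +
            RatFunc.C (κ0 : ℚ) * RatFunc.C N * RatFunc.X := by rw [map_mul]; ring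
  have nA : RatFunc.C N * RatFunc.X - RatFunc.C N ≠ (0 : RatFunc ℚ) := by
    intro h; apply hA; rw [DA, h, zero_div]
  have nB : RatFunc.C (1 + (κ0 : ℚ) - 2 * (κ0 : ℚ) * (g : ℚ)) +
      RatFunc.C (κ0 : ℚ) * RatFunc.C N * RatFunc.X ≠ (0 : RatFunc ℚ) := by
    intro h; apply hB; rw [DB, h, zero_div]
  have hn' : RatFunc.C N = 2 * RatFunc.C (g : ℚ) - RatFunc.C (κg : ℚ) - 1 := by
    have := congrArg RatFunc.C hN
    simpa only [map_sub, map_mul, map_ofNat, map_one] using this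
  have hD' : 1 - 2 * RatFunc.C (κ0 : ℚ) * RatFunc.C (g : ℚ) +
      RatFunc.C (κ0 : ℚ) * (1 + RatFunc.X * RatFunc.C N) ≠ (0 : RatFunc ℚ) := by
    simpa only [map_sub, map_mul, map_one, map_ofNat] using hD
  have nB' : 1 + RatFunc.C (κ0 : ℚ) - 2 * RatFunc.C (κ0 : ℚ) * RatFunc.C (g : ℚ) +
      RatFunc.C (κ0 : ℚ) * RatFunc.C N * RatFunc.X ≠ (0 : RatFunc ℚ) := by
    simpa only [map_add, map_sub, map_mul, map_one, map_ofNat] using nB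
  rw [DA, DB]
  simp only [map_add, map_sub, map_mul, map_one, map_ofNat]
  exact key41_aux (RatFunc.C (κ0 : ℚ)) (RatFunc.C (κg : ℚ)) (RatFunc.C (g : ℚ))
    (RatFunc.C N) RatFunc.X hCd' hn' hC hD' nA nB'
end

section
/- Let d ≥ 3 and a ≥ 2 be integers with (d, a) ≠ (3, 2) and (d, a) ≠ (3, 3). Set A = (1 − a)·((1 − a)^d − 1)/a + d and B = 1 − (1 − a)^d (rational numbers). Then A ≠ B and A ≠ (d + 1 − a)·B; consequently, for every positive rational N, the numerator A + sN·B of z_X(ND, s) has no root in common with the denominator ((d + 1 − a) + sN)(1 + sN) in ℚ[s], i.e. no cancellation occurs in the expression for z_X(ND, s) of Example 4.4. -/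
private lemma auxpow (e : ℕ) (M : ℤ) (hM : 2 ≤ M) : ((e:ℤ) + 2) * M^2 ≤ M^(e+3) := by
  have h1 : ((e:ℤ) + 2) ≤ 2^(e+1) := by
    exact_mod_cast Nat.succ_le_of_lt (Nat.lt_two_pow_self (n := e+1))
  have h2 : (2:ℤ)^(e+1) ≤ M^(e+1) := pow_le_pow_left₀ (by norm_num) hM _
  calc ((e:ℤ)+2) * M^2 ≤ M^(e+1) * M^2 :=
        mul_le_mul_of_nonneg_right (h1.trans h2) (sq_nonneg M)
    _ = M^(e+3) := by ring

private lemma L1 (d m : ℕ) (hd : 3 ≤ d) (hm : 1 ≤ m) (hne : ¬(d = 3 ∧ m = 2)) :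
    (-(m:ℤ))^d - (d:ℤ) * (-(m:ℤ)) + (d:ℤ) - 1 ≠ 0 := by
  have hM1 : (1:ℤ) ≤ (m:ℤ) := by exact_mod_cast hm
  have hd3 : (3:ℤ) ≤ (d:ℤ) := by exact_mod_cast hd
  rcases Nat.even_or_odd d with he | ho
  · rw [he.neg_pow]
    have h1 : (1:ℤ) ≤ (m:ℤ) ^ d := one_le_pow₀ hM1
    apply ne_of_gt
    nlinarith [h1, hM1, hd3]
  · rw [ho.neg_pow]
    rcases eq_or_lt_of_le hm with h1 | h2
    · have hM : (m:ℤ) = 1 := by exact_mod_cast h1.symm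
      rw [hM, one_pow]
      apply ne_of_gt
      linarith
    · have hM2 : (2:ℤ) ≤ (m:ℤ) := by exact_mod_cast h2
      obtain ⟨e, rfl⟩ : ∃ e, d = e + 3 := ⟨d - 3, by omega⟩
      have key : (2:ℤ) ≤ ((e:ℤ) + 1) * ((m:ℤ) - 1) := by
        rcases Nat.eq_zero_or_pos e with rfl | he1
        · have hm3 : 3 ≤ m := by omega
          have h3 : (3:ℤ) ≤ (m:ℤ) := by exact_mod_cast hm3
          nlinarith
        · have h3 : (1:ℤ) ≤ (e:ℤ) := by exact_mod_cast he1
          nlinarith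
      have hp := auxpow e (m:ℤ) hM2
      apply ne_of_lt
      push_cast
      nlinarith [hp, key, hM2, sq_nonneg ((m:ℤ) - 2)]

private lemma L2 (d m : ℕ) (hd : 3 ≤ d) (hm : 1 ≤ m)
    (h1 : ¬(d = 3 ∧ m = 1)) (h2 : ¬(d = 3 ∧ m = 2)) :
    (((d:ℤ) - 2) * (m:ℤ) - (m:ℤ)^2 + (d:ℤ)) * (-(m:ℤ))^d + (m:ℤ)^2 + 2*(m:ℤ) ≠ 0 := by
  have hM1 : (1:ℤ) ≤ (m:ℤ) := by exact_mod_cast hm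
  have hd3 : (3:ℤ) ≤ (d:ℤ) := by exact_mod_cast hd
  set M : ℤ := (m:ℤ) with hMdef
  have hpos : (0:ℤ) < M := by linarith
  have hMd : (1:ℤ) ≤ M ^ d := one_le_pow₀ hM1
  set C : ℤ := ((d:ℤ) - 2) * M - M^2 + (d:ℤ) with hCdef
  have hCid : C = 1 - (M - ((d:ℤ) - 1)) * (M + 1) := by rw [hCdef]; ring
  rcases Nat.even_or_odd d with he | ho
  · rw [he.neg_pow]
    rcases le_or_gt M ((d:ℤ) - 1) with hle | hgt
    · -- M ≤ d-1 : C ≥ 1, everything positive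
      have hC : 1 ≤ C := by nlinarith [mul_nonneg (by linarith : (0:ℤ) ≤ (d:ℤ) - 1 - M) (by linarith : (0:ℤ) ≤ M + 1)]
      have hprod : (1:ℤ) * 1 ≤ C * M^d :=
        mul_le_mul hC hMd (by norm_num) (by linarith)
      apply ne_of_gt
      nlinarith [hprod, hM1]
    · -- M ≥ d ≥ 4 : C ≤ -M, strongly negative
      have hd4 : (4:ℤ) ≤ (d:ℤ) := by
        obtain ⟨k, hk⟩ := he
        have : 4 ≤ d := by omega
        exact_mod_cast this
      have hM4 : (4:ℤ) ≤ M := by linarith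
      have hC : C ≤ -M := by nlinarith [mul_le_mul (by linarith : (1:ℤ) ≤ M - ((d:ℤ)-1)) (le_refl (M+1)) (by linarith) (by linarith)]
      have hpow : M^3 ≤ M^d := pow_le_pow_right₀ hM1 hd
      have e1 : C * M^d ≤ (-M) * M^d :=
        mul_le_mul_of_nonneg_right hC (by positivity)
      have e2 : (-M) * M^d ≤ (-M) * M^3 :=
        mul_le_mul_of_nonpos_left hpow (by linarith)
      apply ne_of_lt
      nlinarith [e1, e2, hM4, sq_nonneg M, sq_nonneg (M-4)]
  · rw [ho.neg_pow]
    rcases le_or_gt M ((d:ℤ) - 1) with hle | hgt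
    · -- M ≤ d - 1 : C ≥ 1
      have hC : 1 ≤ C := by nlinarith [mul_nonneg (by linarith : (0:ℤ) ≤ (d:ℤ) - 1 - M) (by linarith : (0:ℤ) ≤ M + 1)]
      rcases eq_or_lt_of_le hm with hm1 | hm2
      · -- m = 1
        have hM : M = 1 := by rw [hMdef]; exact_mod_cast hm1.symm
        have hd' : d ≠ 3 := by
          intro hd'; exact h1 ⟨hd', hm1.symm⟩
        have hd4 : (4:ℤ) ≤ (d:ℤ) := by
          have : 4 ≤ d := by omega
          exact_mod_cast this
        rw [hM, one_pow]
        apply ne_of_lt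
        rw [hCdef, hM]
        ring_nf
        linarith
      · -- m ≥ 2, then d ≥ 4 (d = 3 forces m = 2, excluded)
        have hM2 : (2:ℤ) ≤ M := by rw [hMdef]; exact_mod_cast hm2
        have hd4n : 4 ≤ d := by
          by_contra hcon
          have hd3' : d = 3 := by omega
          have : M ≤ 2 := by rw [hd3'] at hle; push_cast at hle; linarith
          have hm2' : m = 2 := by
            have : (m:ℤ) ≤ 2 := by rw [← hMdef]; exact this
            have : m ≤ 2 := by exact_mod_cast this
            omega
          exact h2 ⟨hd3', hm2'⟩
        have hd4 : (4:ℤ) ≤ (d:ℤ) := by exact_mod_cast hd4n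
        have hpow4 : M^4 ≤ M^d := pow_le_pow_right₀ hM1 hd4n
        have e1 : (1:ℤ) * M^4 ≤ C * M^d :=
          mul_le_mul hC hpow4 (by positivity) (by linarith)
        have h44 : 4 * M^2 ≤ M^4 := by nlinarith [sq_nonneg M, mul_nonneg (mul_nonneg (sq_nonneg M) (by linarith : (0:ℤ) ≤ M - 2)) (by linarith : (0:ℤ) ≤ M + 2)]
        have hrw : C * (-(M^d)) + M^2 + 2*M = -(C * M^d) + M^2 + 2*M := by ring
        rw [hrw]
        apply ne_of_lt
        nlinarith [e1, h44, hM2]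
    · -- M ≥ d : C ≤ -M, term is positive
      have hC : C ≤ -M := by nlinarith [mul_le_mul (by linarith : (1:ℤ) ≤ M - ((d:ℤ)-1)) (le_refl (M+1)) (by linarith) (by linarith)]
      have hrw : C * (-(M^d)) + M^2 + 2*M = (-C) * M^d + M^2 + 2*M := by ring
      rw [hrw]
      apply ne_of_gt
      have : M * M^d ≤ (-C) * M^d :=
        mul_le_mul_of_nonneg_right (by linarith) (by positivity)
      nlinarith [this, hMd, hM1]

/-- Example 4.4: for `(d, a)` different from `(3, 2)` and `(3, 3)` there is no cancellation
in the expression for `z_X(ND, s)`: with `A = (1−a)((1−a)^d − 1)/a + d` and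
`B = 1 − (1−a)^d` one has `A ≠ B` and `A ≠ (d+1−a)B`, so for any positive rational `N` the
numerator `A + sN·B` has no common root with the denominator `(d+1−a+sN)(1+sN)`. -/
theorem no_cancellation_example44 (d a : ℕ) (hd : 3 ≤ d) (ha : 2 ≤ a)
    (hne1 : ¬(d = 3 ∧ a = 2)) (hne2 : ¬(d = 3 ∧ a = 3)) :
    let A : ℚ := (1 - (a : ℚ)) * ((1 - (a : ℚ)) ^ d - 1) / (a : ℚ) + (d : ℚ)
    let B : ℚ := 1 - (1 - (a : ℚ)) ^ d
    A ≠ B ∧ A ≠ ((d : ℚ) + 1 - (a : ℚ)) * B ∧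
      ∀ N : ℚ, 0 < N → ∀ r : ℚ,
        ¬(A + r * N * B = 0 ∧ (((d : ℚ) + 1 - (a : ℚ)) + r * N) * (1 + r * N) = 0) := by
  obtain ⟨m, rfl⟩ : ∃ m, a = m + 1 := ⟨a - 1, by omega⟩
  intro A B
  have hm : 1 ≤ m := by omega
  have hx : ((m:ℚ) + 1) ≠ 0 := by positivity
  have hcast : ((m + 1 : ℕ) : ℚ) = (m:ℚ) + 1 := by push_cast; ring
  -- key identities
  have hAB : A - B =
      (((-(m:ℤ))^d - (d:ℤ) * (-(m:ℤ)) + (d:ℤ) - 1 : ℤ) : ℚ) / ((m:ℚ) + 1) := by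
    show ((1 - ((m + 1 : ℕ) : ℚ)) * ((1 - ((m + 1 : ℕ) : ℚ)) ^ d - 1) / ((m + 1 : ℕ) : ℚ)
        + (d : ℚ)) - (1 - (1 - ((m + 1 : ℕ) : ℚ)) ^ d) = _
    rw [hcast]
    push_cast
    field_simp
    ring
  have hAdB : A - ((d:ℚ) + 1 - ((m + 1 : ℕ) : ℚ)) * B =
      (((((d:ℤ) - 2) * (m:ℤ) - (m:ℤ)^2 + (d:ℤ)) * (-(m:ℤ))^d + (m:ℤ)^2 + 2*(m:ℤ) : ℤ) : ℚ)
        / ((m:ℚ) + 1) := by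
    show ((1 - ((m + 1 : ℕ) : ℚ)) * ((1 - ((m + 1 : ℕ) : ℚ)) ^ d - 1) / ((m + 1 : ℕ) : ℚ)
        + (d : ℚ)) - ((d:ℚ) + 1 - ((m + 1 : ℕ) : ℚ)) * (1 - (1 - ((m + 1 : ℕ) : ℚ)) ^ d) = _
    rw [hcast]
    push_cast
    field_simp
    ring
  have hL1 : ((-(m:ℤ))^d - (d:ℤ) * (-(m:ℤ)) + (d:ℤ) - 1 : ℤ) ≠ 0 := by
    apply L1 d m hd hm
    rintro ⟨hd3, hm2⟩
    exact hne2 ⟨hd3, by omega⟩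
  have hL2 : ((((d:ℤ) - 2) * (m:ℤ) - (m:ℤ)^2 + (d:ℤ)) * (-(m:ℤ))^d + (m:ℤ)^2 + 2*(m:ℤ) : ℤ) ≠ 0 := by
    apply L2 d m hd hm
    · rintro ⟨hd3, hm1⟩
      exact hne1 ⟨hd3, by omega⟩
    · rintro ⟨hd3, hm2⟩
      exact hne2 ⟨hd3, by omega⟩
  have key1 : A ≠ B := by
    intro h
    have h0 : A - B = 0 := by rw [h]; ring
    rw [hAB] at h0
    rcases div_eq_zero_iff.mp h0 with h0 | h0
    · exact hL1 (by exact_mod_cast h0)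
    · exact hx h0
  have key2 : A ≠ ((d:ℚ) + 1 - ((m + 1 : ℕ) : ℚ)) * B := by
    intro h
    have h0 : A - ((d:ℚ) + 1 - ((m + 1 : ℕ) : ℚ)) * B = 0 := by rw [h]; ring
    rw [hAdB] at h0
    rcases div_eq_zero_iff.mp h0 with h0 | h0
    · exact hL2 (by exact_mod_cast h0)
    · exact hx h0
  refine ⟨key1, key2, ?_⟩
  rintro N hN r ⟨hnum, hden⟩
  rcases mul_eq_zero.mp hden with h | h
  · -- r*N = -(d+1-a)
    have hr : r * N = -((d:ℚ) + 1 - ((m + 1 : ℕ) : ℚ)) := by linarith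
    apply key2
    rw [hr] at hnum
    linarith [hnum]
  · -- r*N = -1
    have hr : r * N = -1 := by linarith
    apply key1
    rw [hr] at hnum
    linarith [hnum]
end
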